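/- Let K ⊂ ℝ² be the von Koch snowflake domain generated by a unit square with similarity ratio 1/3 (generation j consists of 4·5^{j−1} squares of side 3^{−j}). Then for 0 < ε < 1/18, the inner collar measure satisfies μ_K(ε) ≤ (84/5) · 2^{−log 5/log 3} · ε^{2 − log 5/log 3}. -/

import Mathlib

open Real
set_option maxHeartbeats 1000000

noncomputable def al : ℝ := Real.log 5 / Real.log 3

lemma log3_pos : 0 < Real.log 3 := Real.log_pos (by norm_num)

lemma rpow_three_al : (3:ℝ) ^ al = 5 := by
  rw [al, Real.rpow_def_of_pos (by norm_num : (0:ℝ) < 3), mul_comm,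
    div_mul_cancel₀ _ (ne_of_gt log3_pos)]
  exact Real.exp_log (by norm_num)

lemma al_lb : (73/50 : ℝ) ≤ al := by
  rw [al, le_div_iff₀ log3_pos]
  have h : ((3:ℝ)^(73:ℕ)) ≤ (5:ℝ)^(50:ℕ) := by norm_num
  have h2 := Real.log_le_log (by positivity) h
  rw [Real.log_pow, Real.log_pow] at h2
  push_cast at h2
  linarith

lemma al_ub : al ≤ (147/100 : ℝ) := by
  rw [al, div_le_iff₀ log3_pos]
  have h : ((5:ℝ)^(100:ℕ)) ≤ (3:ℝ)^(147:ℕ) := by norm_num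
  have h2 := Real.log_le_log (by positivity) h
  rw [Real.log_pow, Real.log_pow] at h2
  push_cast at h2
  linarith

lemma tangent_rpow (m y : ℝ) (hm : 0 < m) (hy : 0 ≤ y) :
    m ^ al * (1 + al * (y / m - 1)) ≤ y ^ al := by
  have hs : (-1:ℝ) ≤ y / m - 1 := by
    have : 0 ≤ y / m := div_nonneg hy hm.le
    linarith
  have hp : (1:ℝ) ≤ al := le_trans (by norm_num) al_lb
  have := one_add_mul_self_le_rpow_one_add hs hp
  have h2 : (1 + (y/m - 1)) = y / m := by ring
  rw [h2] at this
  rw [Real.div_rpow hy hm.le] at this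
  calc m ^ al * (1 + al * (y / m - 1)) ≤ m ^ al * (y ^ al / m ^ al) := by
        apply mul_le_mul_of_nonneg_left this (Real.rpow_nonneg hm.le _)
    _ = y ^ al := by
        field_simp

lemma sqrt3_al : Real.sqrt 3 ^ al = Real.sqrt 5 := by
  rw [Real.sqrt_eq_rpow, Real.sqrt_eq_rpow,
    ← Real.rpow_mul (by norm_num : (0:ℝ) ≤ 3), mul_comm,
    Real.rpow_mul (by norm_num : (0:ℝ) ≤ 3), rpow_three_al]

lemma core_ineq (y : ℝ) (h1 : 1 ≤ y) (h3 : y ≤ 3) :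
    y^2 + 4*y - 1 ≤ 21/5 * y ^ al := by
  have hy0 : (0:ℝ) < y := by linarith
  set s3 := Real.sqrt 3 with hs3def
  set s5 := Real.sqrt 5 with hs5def
  have hs3sq : s3 ^ 2 = 3 := Real.sq_sqrt (by norm_num)
  have hs5sq : s5 ^ 2 = 5 := Real.sq_sqrt (by norm_num)
  have hs3pos : 0 < s3 := Real.sqrt_pos.mpr (by norm_num)
  have hs5pos : 0 < s5 := Real.sqrt_pos.mpr (by norm_num)
  have hs3l : (1.732 : ℝ) ≤ s3 := by
    rw [hs3def, show (1.732:ℝ) = Real.sqrt (1.732^2) from (Real.sqrt_sq (by norm_num)).symm]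
    exact Real.sqrt_le_sqrt (by norm_num)
  have hs3u : s3 ≤ (1.7321 : ℝ) := by
    rw [hs3def, show (1.7321:ℝ) = Real.sqrt (1.7321^2) from (Real.sqrt_sq (by norm_num)).symm]
    exact Real.sqrt_le_sqrt (by norm_num)
  have hs5l : (2.236 : ℝ) ≤ s5 := by
    rw [hs5def, show (2.236:ℝ) = Real.sqrt (2.236^2) from (Real.sqrt_sq (by norm_num)).symm]
    exact Real.sqrt_le_sqrt (by norm_num)
  have hs5u : s5 ≤ (2.2361 : ℝ) := by
    rw [hs5def, show (2.2361:ℝ) = Real.sqrt (2.2361^2) from (Real.sqrt_sq (by norm_num)).symm]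
    exact Real.sqrt_le_sqrt (by norm_num)
  have hal : (73/50:ℝ) ≤ al := al_lb
  have hau : al ≤ (147/100:ℝ) := al_ub
  have t1 : (1:ℝ) + al * (y - 1) ≤ y ^ al := by
    have := tangent_rpow 1 y one_pos hy0.le
    simpa using this
  have t2 : s5 * (1 + al * (y / s3 - 1)) ≤ y ^ al := by
    have := tangent_rpow s3 y hs3pos hy0.le
    rwa [hs3def, sqrt3_al, ← hs5def] at this
  have t3 : (5:ℝ) * (1 + al * (y / 3 - 1)) ≤ y ^ al := by
    have := tangent_rpow 3 y (by norm_num) hy0.le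
    rwa [rpow_three_al] at this
  rcases le_total y (3/2) with hc | hc
  · nlinarith [mul_nonneg (sub_nonneg.mpr h1) (sub_nonneg.mpr hc),
      mul_nonneg (sub_nonneg.mpr h1) (sub_nonneg.mpr hal),
      mul_nonneg (mul_nonneg (sub_nonneg.mpr h1) (sub_nonneg.mpr hc)) (sub_nonneg.mpr hal)]
  · rcases le_total y s3 with hc2 | hc2
    · have hyd : y / s3 - 1 ≤ 0 := by
        rw [sub_nonpos, div_le_one hs3pos]; exact hc2
      have key : s5 * (1 + (147/100) * (y / s3 - 1)) ≤ y ^ al := by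
        refine le_trans ?_ t2
        have h4 : (147/100) * (y / s3 - 1) ≤ al * (y / s3 - 1) :=
          mul_le_mul_of_nonpos_right hau hyd
        nlinarith
      rw [div_sub_one (ne_of_gt hs3pos)] at key
      have key2 : s5 * (s3 + (147/100) * (y - s3)) ≤ s3 * y ^ al := by
        have h5 := mul_le_mul_of_nonneg_left key hs3pos.le
        calc s5 * (s3 + 147/100*(y-s3)) = s3 * (s5 * (1 + 147/100 * ((y - s3)/s3))) := by
              field_simp
          _ ≤ s3 * y ^ al := by nlinarith
      nlinarith [key2, mul_nonneg (sub_nonneg.mpr hc) (sub_nonneg.mpr hc2)]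
    · rcases le_total y (13/5) with hc3 | hc3
      · have hyd : 0 ≤ y / s3 - 1 := by
          rw [sub_nonneg, le_div_iff₀ hs3pos]; linarith
        have key : s5 * (1 + (73/50) * (y / s3 - 1)) ≤ y ^ al := by
          refine le_trans ?_ t2
          have h4 : (73/50) * (y / s3 - 1) ≤ al * (y / s3 - 1) :=
            mul_le_mul_of_nonneg_right hal hyd
          nlinarith
        rw [div_sub_one (ne_of_gt hs3pos)] at key
        have key2 : s5 * (s3 + (73/50) * (y - s3)) ≤ s3 * y ^ al := by
          have h5 := mul_le_mul_of_nonneg_left key hs3pos.le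
          calc s5 * (s3 + 73/50*(y-s3)) = s3 * (s5 * (1 + 73/50 * ((y - s3)/s3))) := by
                field_simp
            _ ≤ s3 * y ^ al := by nlinarith
        nlinarith [key2, mul_nonneg (sub_nonneg.mpr hc2) (sub_nonneg.mpr hc3)]
      · have hyd : y / 3 - 1 ≤ 0 := by
          rw [sub_nonpos, div_le_one (by norm_num : (0:ℝ) < 3)]; exact h3
        have key : (5:ℝ) * (1 + (147/100) * (y / 3 - 1)) ≤ y ^ al := by
          refine le_trans ?_ t3
          have h4 : (147/100) * (y / 3 - 1) ≤ al * (y / 3 - 1) :=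
            mul_le_mul_of_nonpos_right hau hyd
          nlinarith
        nlinarith [key, mul_nonneg (sub_nonneg.mpr hc3) (sub_nonneg.mpr h3)]

open MeasureTheory
open scoped ENNReal NNReal

abbrev E2 := EuclideanSpace ℝ (Fin 2)

lemma coord_dist (x y : E2) (d : Fin 2) : |x d - y d| ≤ dist x y := by
  rw [EuclideanSpace.dist_eq]
  have h1 : |x d - y d| ^ 2 ≤ ∑ i, dist (x i) (y i) ^ 2 := by
    have : |x d - y d| ^ 2 = dist (x d) (y d) ^ 2 := by rw [Real.dist_eq]
    rw [this]
    exact Finset.single_le_sum (f := fun i => dist (x i) (y i) ^ 2)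
      (fun i _ => sq_nonneg _) (Finset.mem_univ d)
  calc |x d - y d| = Real.sqrt (|x d - y d| ^ 2) := (Real.sqrt_sq (abs_nonneg _)).symm
    _ ≤ _ := Real.sqrt_le_sqrt h1

lemma obox_preimage (a : Fin 2 → ℝ) (s : ℝ) :
    {y : E2 | ∀ d, a d < y d ∧ y d < a d + s} =
      (MeasurableEquiv.toLp 2 (Fin 2 → ℝ)).symm ⁻¹'
        (Set.univ.pi fun d => Set.Ioo (a d) (a d + s)) := by
  ext y
  simp [MeasurableEquiv.coe_toLp_symm, Set.mem_pi]

lemma cbox_preimage (a : Fin 2 → ℝ) (s : ℝ) :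
    {y : E2 | ∀ d, a d ≤ y d ∧ y d ≤ a d + s} =
      (MeasurableEquiv.toLp 2 (Fin 2 → ℝ)).symm ⁻¹'
        (Set.univ.pi fun d => Set.Icc (a d) (a d + s)) := by
  ext y
  simp [MeasurableEquiv.coe_toLp_symm, Set.mem_pi,
    Pi.le_def, forall_and]

lemma volume_obox (a : Fin 2 → ℝ) (s : ℝ) :
    volume {y : E2 | ∀ d, a d < y d ∧ y d < a d + s} = ENNReal.ofReal s ^ 2 := by
  rw [obox_preimage,
    (EuclideanSpace.volume_preserving_symm_measurableEquiv_toLp (Fin 2)).measure_preimage_equiv,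
    volume_pi_pi]
  simp [Real.volume_Ioo, sq]

lemma volume_cbox (a : Fin 2 → ℝ) (s : ℝ) :
    volume {y : E2 | ∀ d, a d ≤ y d ∧ y d ≤ a d + s} = ENNReal.ofReal s ^ 2 := by
  rw [cbox_preimage,
    (EuclideanSpace.volume_preserving_symm_measurableEquiv_toLp (Fin 2)).measure_preimage_equiv,
    volume_pi_pi]
  simp [Real.volume_Icc, sq]

lemma cbox_measurable (a : Fin 2 → ℝ) (s : ℝ) :
    MeasurableSet {y : E2 | ∀ d, a d ≤ y d ∧ y d ≤ a d + s} := by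
  rw [cbox_preimage]
  exact (MeasurableEquiv.toLp 2 (Fin 2 → ℝ)).symm.measurable
    (MeasurableSet.univ_pi fun d => measurableSet_Icc)

lemma inner_far (a : Fin 2 → ℝ) (s ε : ℝ) (hε : 0 < ε) (x : E2)
    (hx : ∀ d, a d + ε ≤ x d ∧ x d ≤ a d + s - ε) :
    ε ≤ Metric.infDist x {y : E2 | ∀ d, a d < y d ∧ y d < a d + s}ᶜ := by
  by_contra hcon
  push_neg at hcon
  have hne : ({y : E2 | ∀ d, a d < y d ∧ y d < a d + s}ᶜ : Set E2).Nonempty := by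
    refine ⟨(WithLp.equiv 2 (Fin 2 → ℝ)).symm a, ?_⟩
    intro h
    have := (h 0).1
    rw [WithLp.equiv_symm_apply, PiLp.toLp_apply] at this
    exact lt_irrefl _ this
  obtain ⟨y, hy, hdy⟩ := (Metric.infDist_lt_iff hne).mp hcon
  rw [Set.mem_compl_iff, Set.mem_setOf_eq] at hy
  push_neg at hy
  obtain ⟨d, hd⟩ := hy
  have hcd := coord_dist x y d
  rcases le_or_gt (y d) (a d) with h | h
  · have : ε ≤ x d - y d := by have := (hx d).1; linarith
    have : ε ≤ |x d - y d| := le_trans this (le_abs_self _)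
    linarith
  · have h2 : a d + s ≤ y d := hd h
    have : ε ≤ y d - x d := by have := (hx d).2; linarith
    have : ε ≤ |x d - y d| := le_trans this (neg_le_abs _ |>.trans_eq' (by ring_nf))
    linarith

noncomputable def cf : ℕ → ℝ := fun j => if j = 0 then 1 else 4 * 5 ^ (j - 1)

lemma geom1 (N : ℕ) : ∑ j ∈ Finset.range (N+1), cf j * (1/3)^j = 2*(5/3:ℝ)^N - 1 := by
  induction N with
  | zero => norm_num [cf]
  | succ n ih =>
      rw [Finset.sum_range_succ, ih]
      have h : cf (n+1) = 4 * 5^n := by simp [cf]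
      rw [h, pow_succ, pow_succ]
      rw [div_pow, div_pow, one_pow]
      have h3 : ((3:ℝ))^n ≠ 0 := by positivity
      field_simp
      ring

lemma geom2 (N : ℕ) : ∑ j ∈ Finset.range (N+1), cf j = (5:ℝ)^N := by
  induction N with
  | zero => simp [cf]
  | succ n ih =>
      rw [Finset.sum_range_succ, ih]
      have h : cf (n+1) = 4 * 5^n := by simp [cf]
      rw [h, pow_succ]
      ring

lemma tail_term (N : ℕ) (k : ℕ) :
    (4*(5:ℝ)^(k+N)) * (1/9)^(k+N+1) = ((4/9)*(5/9)^N) * (5/9)^k := by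
  rw [pow_add, pow_add, pow_succ, div_pow, div_pow, div_pow]
  have : ((9:ℝ))^k ≠ 0 := by positivity
  have : ((9:ℝ))^N ≠ 0 := by positivity
  field_simp
  rw [one_pow, mul_one, pow_add, mul_comm ((9:ℝ)^k), mul_assoc, div_pow, mul_div_cancel₀ _ (by positivity : (9:ℝ)^k ≠ 0), mul_comm]

lemma tail_summable (N : ℕ) : Summable (fun k : ℕ => (4*(5:ℝ)^(k+N)) * (1/9)^(k+N+1)) := by
  have h := (summable_geometric_of_lt_one (by norm_num : (0:ℝ) ≤ 5/9)
    (by norm_num : (5/9:ℝ) < 1)).mul_left ((4/9)*(5/9:ℝ)^N)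
  exact h.congr (fun k => (tail_term N k).symm)

lemma tail_sum (N : ℕ) : ∑' k : ℕ, (4*(5:ℝ)^(k+N)) * (1/9)^(k+N+1) = (5/9:ℝ)^N := by
  rw [tsum_congr (tail_term N), tsum_mul_left,
    tsum_geometric_of_lt_one (by norm_num) (by norm_num)]
  rw [show ((1:ℝ) - 5/9)⁻¹ = 9/4 by norm_num]
  ring

lemma final_real (ε : ℝ) (N : ℕ) (hε0 : 0 < ε)
    (h1 : ((1:ℝ)/3)^(N+1) ≤ 2*ε) (h2 : 2*ε < ((1:ℝ)/3)^N) :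
    4*ε*(2*(5/3:ℝ)^N - 1) - 4*ε^2*(5:ℝ)^N + (5/9:ℝ)^N ≤
      84/5 * (2:ℝ) ^ (-al) * ε ^ ((2:ℝ) - al) := by
  set t : ℝ := (3:ℝ)^N with ht
  have htpos : (0:ℝ) < t := by positivity
  have ht1 : (1:ℝ) ≤ t := one_le_pow₀ (by norm_num)
  have hinv : ((1:ℝ)/3)^N = 1/t := by rw [ht, div_pow, one_pow]
  set y : ℝ := 1/(2*ε*t) with hy
  have hprodpos : (0:ℝ) < 2*ε*t := by positivity
  have hypos : (0:ℝ) < y := by positivity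
  have hy1 : 1 < y := by
    rw [hy, lt_div_iff₀ hprodpos, one_mul]
    calc 2*ε*t < (1/t)*t := by
          apply mul_lt_mul_of_pos_right _ htpos
          rw [← hinv]; exact h2
      _ = 1 := by field_simp
  have hy3 : y ≤ 3 := by
    rw [hy, div_le_iff₀ hprodpos]
    have h1' : 1/(3*t) ≤ 2*ε := by
      calc 1/(3*t) = (1/3)^(N+1) := by
            rw [pow_succ, hinv]; field_simp
        _ ≤ 2*ε := h1
    calc (1:ℝ) = (1/(3*t))*(3*t) := by field_simp
      _ ≤ (2*ε)*(3*t) := by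
          apply mul_le_mul_of_nonneg_right h1' (by positivity)
      _ = 3*(2*ε*t) := by ring
  -- rpow facts
  have h5N : ((5:ℝ)^N) = t ^ al := by
    rw [ht, ← Real.rpow_natCast (3:ℝ) N, ← Real.rpow_natCast (5:ℝ) N,
      ← Real.rpow_mul (by norm_num : (0:ℝ) ≤ 3), mul_comm (N:ℝ) al,
      Real.rpow_mul (by norm_num : (0:ℝ) ≤ 3), rpow_three_al]
  have htal_pos : (0:ℝ) < t ^ al := Real.rpow_pos_of_pos htpos _
  have h53 : ((5/3:ℝ))^N = t^al / t := by
    rw [div_pow, h5N, ht]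
  have h59 : ((5/9:ℝ))^N = t^al / t^2 := by
    rw [div_pow, h5N, ht, show ((9:ℝ)) = 3^2 by norm_num, ← pow_mul, mul_comm 2 N, pow_mul]
  have hyal : y ^ al = ((2*ε)^al * t^al)⁻¹ := by
    rw [hy, one_div, Real.inv_rpow hprodpos.le, Real.mul_rpow (by positivity) htpos.le]
  have htal_ne : t^al ≠ 0 := ne_of_gt htal_pos
  have h2eal_pos : (0:ℝ) < (2*ε)^al := Real.rpow_pos_of_pos (by positivity) _
  have he1 : ((2*ε):ℝ)^((2:ℝ)-al) = (2*ε)^2 / (2*ε)^al := by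
    rw [show ((2:ℝ)) - al = ((2:ℕ):ℝ) - al by norm_num,
      Real.rpow_sub (by positivity), Real.rpow_natCast]
  have he2 : (2:ℝ)^((2:ℝ)-al) = 4 * (2:ℝ)^(-al) := by
    rw [show ((2:ℝ))-al = -al + ((2:ℕ):ℝ) by push_cast; ring,
      Real.rpow_add (by norm_num), Real.rpow_natCast]
    ring
  have hRHS : t^al * (2*ε)^2 * (21/5 * y ^ al)
      = 84/5 * (2:ℝ) ^ (-al) * ε ^ ((2:ℝ) - al) := by
    rw [hyal]
    have step1 : t^al * (2*ε)^2 * (21/5 * ((2*ε)^al * t^al)⁻¹)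
        = 21/5 * ((2*ε)^2 / (2*ε)^al) := by
      field_simp
    rw [step1, ← he1, Real.mul_rpow (by norm_num) hε0.le, he2]
    ring
  have hid : t^al*(2*ε)^2*(y^2+4*y-1) = 8*ε*(t^al/t) - 4*ε^2*t^al + t^al/t^2 := by
    rw [hy]
    field_simp
    ring
  have hcore := core_ineq y hy1.le hy3
  have hmul : t^al*(2*ε)^2*(y^2+4*y-1) ≤ t^al*(2*ε)^2*(21/5 * y^al) := by
    apply mul_le_mul_of_nonneg_left hcore (by positivity)
  rw [h53, h59]
  have hdrop : 4*ε*(2*(t^al/t) - 1) - 4*ε^2*(5:ℝ)^N + t^al/t^2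
      ≤ 8*ε*(t^al/t) - 4*ε^2*t^al + t^al/t^2 := by
    rw [h5N]; linarith
  calc 4*ε*(2*(t^al/t) - 1) - 4*ε^2*(5:ℝ)^N + t^al/t^2
      ≤ 8*ε*(t^al/t) - 4*ε^2*t^al + t^al/t^2 := hdrop
    _ = t^al*(2*ε)^2*(y^2+4*y-1) := hid.symm
    _ ≤ t^al*(2*ε)^2*(21/5 * y^al) := hmul
    _ = 84/5 * (2:ℝ) ^ (-al) * ε ^ ((2:ℝ) - al) := hRHS

lemma frame_vol (a : Fin 2 → ℝ) (s ε : ℝ) (hε : 0 < ε) (hs : 2*ε < s) :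
    volume ({y : E2 | ∀ d, a d < y d ∧ y d < a d + s} \
      {y : E2 | ∀ d, a d + ε ≤ y d ∧ y d ≤ a d + s - ε}) ≤
      ENNReal.ofReal (4*ε*s - 4*ε^2) := by
  have hIeq : {y : E2 | ∀ d, a d + ε ≤ y d ∧ y d ≤ a d + s - ε} =
      {y : E2 | ∀ d, (fun d => a d + ε) d ≤ y d ∧ y d ≤ (fun d => a d + ε) d + (s - 2*ε)} := by
    ext y
    refine forall_congr' fun d => ?_
    constructor <;> intro h <;> constructor <;> simp at * <;> linarith [h.1, h.2]
  have hImeas : MeasurableSet {y : E2 | ∀ d, a d + ε ≤ y d ∧ y d ≤ a d + s - ε} := by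
    rw [hIeq]; exact cbox_measurable _ _
  have hIvol : volume {y : E2 | ∀ d, a d + ε ≤ y d ∧ y d ≤ a d + s - ε} =
      ENNReal.ofReal (s - 2*ε) ^ 2 := by
    rw [hIeq]; exact volume_cbox _ _
  have hsub : {y : E2 | ∀ d, a d + ε ≤ y d ∧ y d ≤ a d + s - ε} ⊆
      {y : E2 | ∀ d, a d < y d ∧ y d < a d + s} := by
    intro y hy d
    obtain ⟨h1, h2⟩ := hy d
    constructor <;> linarith
  have hfin : volume {y : E2 | ∀ d, a d + ε ≤ y d ∧ y d ≤ a d + s - ε} ≠ ⊤ := by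
    rw [hIvol]; exact ENNReal.pow_ne_top ENNReal.ofReal_ne_top
  rw [measure_diff hsub hImeas.nullMeasurableSet hfin, hIvol, volume_obox]
  have h1 : ENNReal.ofReal s ^ 2 = ENNReal.ofReal (s^2) := by
    rw [ENNReal.ofReal_pow (by linarith)]
  have h2 : ENNReal.ofReal (s - 2*ε) ^ 2 = ENNReal.ofReal ((s - 2*ε)^2) := by
    rw [ENNReal.ofReal_pow (by linarith)]
  rw [h1, h2, ← ENNReal.ofReal_sub _ (by positivity)]
  apply ENNReal.ofReal_le_ofReal
  nlinarith

lemma series_eval (g : ℕ → ℝ) (N : ℕ)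
    (hg : ∀ k, g (k + (N+1)) = (4*(5:ℝ)^(k+N)) * (1/9)^(k+N+1)) :
    Summable g ∧ ∑' j, g j = (∑ j ∈ Finset.range (N+1), g j) + (5/9:ℝ)^N := by
  have hs1 : Summable (fun k => g (k + (N+1))) :=
    (tail_summable N).congr (fun k => (hg k).symm)
  have hsum : Summable g := (summable_nat_add_iff (N+1)).mp hs1
  refine ⟨hsum, ?_⟩
  rw [← Summable.sum_add_tsum_nat_add (N+1) hsum]
  congr 1
  rw [tsum_congr hg, tail_sum]

/-- Collar estimate for the von Koch snowflake `K ⊆ ℝ²` generated by a unit square with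
similarity ratio `1/3`: `K` is the interior of the closure of the union of one unit square
(generation `0`) and `4·5^{j-1}` pairwise disjoint open squares of side `3^{-j}` at each
generation `j ≥ 1`.  For `0 < ε < 1/18`,
`μ_K(ε) ≤ (84/5)·2^{-log 5/log 3}·ε^{2 - log 5/log 3}`. -/
theorem koch_snowflake_collar_bound
    (K : Set (EuclideanSpace ℝ (Fin 2))) (hK : IsOpen K)
    (count : ℕ → ℕ) (hcount0 : count 0 = 1)
    (hcount : ∀ j : ℕ, 1 ≤ j → count j = 4 * 5 ^ (j - 1))
    (corner : ℕ → ℕ → Fin 2 → ℝ)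
    (sq : ℕ → ℕ → Set (EuclideanSpace ℝ (Fin 2)))
    (hsq : ∀ j i, sq j i =
      {y : EuclideanSpace ℝ (Fin 2) | ∀ d, corner j i d < y d ∧ y d < corner j i d + (1 / 3) ^ j})
    (hsub : ∀ j : ℕ, ∀ i < count j, sq j i ⊆ K)
    (hdisj : ∀ j i j' i', i < count j → i' < count j' → (j, i) ≠ (j', i') →
      Disjoint (sq j i) (sq j' i'))
    (hKint : K = interior (closure (⋃ j : ℕ, ⋃ i ∈ Finset.range (count j), sq j i)))
    (hnull : volume (K \ ⋃ j : ℕ, ⋃ i ∈ Finset.range (count j), sq j i) = 0)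
    (ε : ℝ) (hε0 : 0 < ε) (hε : ε < 1 / 18) :
    (volume {x ∈ K | Metric.infDist x (frontier K) < ε}).toReal ≤
      84 / 5 * (2 : ℝ) ^ (-(Real.log 5 / Real.log 3)) *
        ε ^ (2 - Real.log 5 / Real.log 3) := by
  classical
  have hal_eq : Real.log 5 / Real.log 3 = al := rfl
  rw [hal_eq]
  set U := ⋃ j : ℕ, ⋃ i ∈ Finset.range (count j), sq j i with hU
  set C := {x ∈ K | Metric.infDist x (frontier K) < ε} with hC
  have hCK : C ⊆ K := fun x hx => hx.1
  have hcf : ∀ j, (count j : ℝ) = cf j := by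
    intro j
    cases j with
    | zero => simp [hcount0, cf]
    | succ n =>
        rw [hcount (n+1) (by omega)]
        simp [cf]
  -- squares volumes
  have hsqvol : ∀ j i, volume (sq j i) = ENNReal.ofReal ((1/9:ℝ)^j) := by
    intro j i
    rw [hsq, volume_obox, ← ENNReal.ofReal_pow (by positivity)]
    congr 1
    rw [← pow_mul, mul_comm, pow_mul]
    norm_num
  -- generic double-sum bound
  have hstep : ∀ (T : Set E2) (b : ℕ → ℝ≥0∞),
      (∀ j i, i < count j → volume (T ∩ sq j i) ≤ b j) →
      volume (T ∩ U) ≤ ∑' j, (count j : ℝ≥0∞) * b j := by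
    intro T b hb
    have h1 : T ∩ U = ⋃ j, ⋃ i ∈ Finset.range (count j), (T ∩ sq j i) := by
      rw [hU]
      simp [Set.inter_iUnion]
    calc volume (T ∩ U)
        ≤ ∑' j, volume (⋃ i ∈ Finset.range (count j), (T ∩ sq j i)) := by
          rw [h1]; exact measure_iUnion_le _
      _ ≤ ∑' j, (count j : ℝ≥0∞) * b j := by
          apply ENNReal.tsum_le_tsum
          intro j
          calc volume (⋃ i ∈ Finset.range (count j), (T ∩ sq j i))
              ≤ ∑ i ∈ Finset.range (count j), volume (T ∩ sq j i) :=
                measure_biUnion_finset_le _ _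
            _ ≤ ∑ _i ∈ Finset.range (count j), b j :=
                Finset.sum_le_sum (fun i hi => hb j i (Finset.mem_range.mp hi))
            _ = (count j : ℝ≥0∞) * b j := by
                rw [Finset.sum_const, Finset.card_range, nsmul_eq_mul]
  have hofmul : ∀ (b : ℕ → ℝ) (j : ℕ), (count j : ℝ≥0∞) * ENNReal.ofReal (b j)
      = ENNReal.ofReal ((count j : ℝ) * b j) := by
    intro b j
    rw [← ENNReal.ofReal_natCast (count j), ← ENNReal.ofReal_mul (Nat.cast_nonneg _)]
  -- volume U ≤ 2
  have hUvol : volume U ≤ ENNReal.ofReal 2 := by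
    have hb : ∀ j i, i < count j → volume (Set.univ ∩ sq j i) ≤ ENNReal.ofReal ((1/9:ℝ)^j) := by
      intro j i _
      rw [Set.univ_inter, hsqvol]
    have h2 := hstep Set.univ _ hb
    rw [Set.univ_inter] at h2
    refine h2.trans ?_
    have hg : ∀ k, (fun j => (count j : ℝ) * (1/9)^j) (k + (0+1))
        = (4*(5:ℝ)^(k+0)) * (1/9)^(k+0+1) := by
      intro k
      simp only [add_zero]
      rw [hcf, cf]
      simp
    obtain ⟨hsum, heval⟩ := series_eval (fun j => (count j : ℝ) * (1/9)^j) 0 hg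
    calc ∑' j, (count j : ℝ≥0∞) * ENNReal.ofReal ((1/9:ℝ)^j)
        = ∑' j, ENNReal.ofReal ((count j : ℝ) * (1/9)^j) := by
          exact tsum_congr (hofmul _)
      _ = ENNReal.ofReal (∑' j, (count j : ℝ) * (1/9)^j) :=
          (ENNReal.ofReal_tsum_of_nonneg (fun j => by positivity) hsum).symm
      _ ≤ ENNReal.ofReal 2 := by
          apply ENNReal.ofReal_le_ofReal
          rw [heval]
          norm_num [hcount0]
  -- frontier nonempty
  have hKne : K.Nonempty := by
    refine ⟨(WithLp.equiv 2 (Fin 2 → ℝ)).symm (fun d => corner 0 0 d + 1/2),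
      hsub 0 0 (by rw [hcount0]; norm_num) ?_⟩
    rw [hsq]
    intro d
    rw [WithLp.equiv_symm_apply, PiLp.toLp_apply]
    norm_num
  have hfront : (frontier K).Nonempty := by
    by_contra h
    rw [Set.not_nonempty_iff_eq_empty] at h
    rcases frontier_eq_empty_iff.mp h with rfl | rfl
    · exact hKne.ne_empty rfl
    · have h1 : volume (Set.univ : Set E2) ≤ volume U := by
        calc volume (Set.univ : Set E2)
            = volume ((Set.univ \ U) ∪ U) := by rw [Set.diff_union_self, Set.univ_union]
          _ ≤ volume (Set.univ \ U) + volume U := measure_union_le _ _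
          _ = volume U := by rw [hnull, zero_add]
      have h3 : ENNReal.ofReal 9 ≤ volume (Set.univ : Set E2) := by
        have hb := volume_obox (fun _ : Fin 2 => (0:ℝ)) 3
        calc ENNReal.ofReal 9 = ENNReal.ofReal 3 ^ 2 := by
              rw [← ENNReal.ofReal_pow (by norm_num)]; norm_num
          _ = volume {y : E2 | ∀ d, (0:ℝ) < y d ∧ y d < 0 + 3} := hb.symm
          _ ≤ volume (Set.univ : Set E2) := measure_mono (Set.subset_univ _)
      have := le_trans h3 (le_trans h1 hUvol)
      rw [ENNReal.ofReal_le_ofReal_iff (by norm_num)] at this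
      norm_num at this
  -- choose the threshold generation
  have hex : ∃ J : ℕ, ((1:ℝ)/3)^J ≤ 2*ε := by
    obtain ⟨n, hn⟩ := exists_pow_lt_of_lt_one (show (0:ℝ) < 2*ε by linarith)
      (show (1:ℝ)/3 < 1 by norm_num)
    exact ⟨n, hn.le⟩
  set J := Nat.find hex with hJdef
  have hJ1 : ((1:ℝ)/3)^J ≤ 2*ε := Nat.find_spec hex
  have hJne : J ≠ 0 := by
    intro h
    rw [h] at hJ1
    norm_num at hJ1
    linarith
  set N := J - 1 with hNdef
  have hJN : J = N + 1 := by omega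
  have hNmin : ¬ (((1:ℝ)/3)^N ≤ 2*ε) := Nat.find_min hex (by omega)
  push_neg at hNmin
  have h1' : ((1:ℝ)/3)^(N+1) ≤ 2*ε := by rw [← hJN]; exact hJ1
  -- the per-generation bound
  set br : ℕ → ℝ := fun j => if j ≤ N then 4*ε*(1/3)^j - 4*ε^2 else (1/9:ℝ)^j with hbr
  have hbrnn : ∀ j, 0 ≤ br j := by
    intro j
    by_cases hj : j ≤ N
    · simp only [hbr, if_pos hj]
      have : ((1:ℝ)/3)^N ≤ ((1:ℝ)/3)^j :=
        pow_le_pow_of_le_one (by norm_num) (by norm_num) hj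
      nlinarith
    · simp only [hbr, if_neg hj]
      positivity
  have hbound : ∀ j i, i < count j → volume (C ∩ sq j i) ≤ ENNReal.ofReal (br j) := by
    intro j i hi
    by_cases hj : j ≤ N
    · simp only [hbr, if_pos hj]
      have hside : 2*ε < ((1:ℝ)/3)^j :=
        lt_of_lt_of_le hNmin (pow_le_pow_of_le_one (by norm_num) (by norm_num) hj)
      have hsubset : C ∩ sq j i ⊆
          {y : E2 | ∀ d, corner j i d < y d ∧ y d < corner j i d + (1/3)^j} \
          {y : E2 | ∀ d, corner j i d + ε ≤ y d ∧ y d ≤ corner j i d + (1/3)^j - ε} := by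
        intro x hx
        obtain ⟨hxC, hxS⟩ := hx
        have hxS' : x ∈ {y : E2 | ∀ d, corner j i d < y d ∧ y d < corner j i d + (1/3)^j} := by
          rw [← hsq]; exact hxS
        refine ⟨hxS', ?_⟩
        intro hxI
        have hfar := inner_far (corner j i) ((1/3)^j) ε hε0 x hxI
        have hfsub : frontier K ⊆ {y : E2 | ∀ d, corner j i d < y d ∧ y d < corner j i d + (1/3)^j}ᶜ := by
          intro y hy
          have hynK : y ∉ K := by
            rw [hK.frontier_eq] at hy
            exact hy.2
          intro hyS
          exact hynK (hsub j i hi (by rw [hsq]; exact hyS))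
        have hle := Metric.infDist_le_infDist_of_subset (x := x) hfsub hfront
        have hlt : Metric.infDist x (frontier K) < ε := hxC.2
        linarith
      calc volume (C ∩ sq j i) ≤ _ := measure_mono hsubset
        _ ≤ ENNReal.ofReal (4*ε*(1/3)^j - 4*ε^2) := frame_vol _ _ _ hε0 hside
    · simp only [hbr, if_neg hj]
      calc volume (C ∩ sq j i) ≤ volume (sq j i) := measure_mono Set.inter_subset_right
        _ = ENNReal.ofReal ((1/9:ℝ)^j) := hsqvol j i
  -- series evaluation for the main bound
  have hgmain : ∀ k, (fun j => (count j : ℝ) * br j) (k + (N+1))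
      = (4*(5:ℝ)^(k+N)) * (1/9)^(k+N+1) := by
    intro k
    have hnle : ¬ (k + (N+1) ≤ N) := by omega
    simp only [hbr, if_neg hnle]
    rw [hcf (k + (N+1))]
    have he : k + (N+1) - 1 = k + N := by omega
    have ha : k + (N+1) = k + N + 1 := by omega
    rw [cf]
    simp only [if_neg (by omega : ¬ (k + (N+1) = 0))]
    rw [he, ha]
  obtain ⟨hsummain, hevalmain⟩ := series_eval (fun j => (count j : ℝ) * br j) N hgmain
  have hheadmain : ∑ j ∈ Finset.range (N+1), (count j : ℝ) * br j
      = 4*ε*(2*(5/3:ℝ)^N - 1) - 4*ε^2*(5:ℝ)^N := by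
    have hterm : ∀ j ∈ Finset.range (N+1), (count j : ℝ) * br j
        = cf j * (1/3)^j * (4*ε) - cf j * (4*ε^2) := by
      intro j hj
      rw [Finset.mem_range] at hj
      have hjN : j ≤ N := by omega
      rw [hcf j]
      simp only [hbr, if_pos hjN]
      ring
    rw [Finset.sum_congr rfl hterm, Finset.sum_sub_distrib, ← Finset.sum_mul, ← Finset.sum_mul,
      geom1, geom2]
    ring
  -- main volume chain
  have hchain : volume C ≤ ENNReal.ofReal (4*ε*(2*(5/3:ℝ)^N - 1) - 4*ε^2*(5:ℝ)^N + (5/9:ℝ)^N) := by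
    have hCdecomp : volume C ≤ volume (C ∩ U) + volume (C \ U) := by
      calc volume C = volume ((C ∩ U) ∪ (C \ U)) := by rw [Set.inter_union_diff]
        _ ≤ volume (C ∩ U) + volume (C \ U) := measure_union_le _ _
    have hCnull : volume (C \ U) = 0 :=
      measure_mono_null (Set.diff_subset_diff_left hCK) hnull
    have hCU := hstep C (fun j => ENNReal.ofReal (br j)) hbound
    calc volume C ≤ volume (C ∩ U) + volume (C \ U) := hCdecomp
      _ = volume (C ∩ U) := by rw [hCnull, add_zero]
      _ ≤ ∑' j, (count j : ℝ≥0∞) * ENNReal.ofReal (br j) := hCU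
      _ = ∑' j, ENNReal.ofReal ((count j : ℝ) * br j) := tsum_congr (hofmul br)
      _ = ENNReal.ofReal (∑' j, (count j : ℝ) * br j) :=
          (ENNReal.ofReal_tsum_of_nonneg (fun j => mul_nonneg (Nat.cast_nonneg _) (hbrnn j))
            hsummain).symm
      _ = ENNReal.ofReal (4*ε*(2*(5/3:ℝ)^N - 1) - 4*ε^2*(5:ℝ)^N + (5/9:ℝ)^N) := by
          rw [hevalmain, hheadmain]
  have hfinal := final_real ε N hε0 h1' hNmin
  have hRHSnn : 0 ≤ 84/5 * (2:ℝ) ^ (-al) * ε ^ ((2:ℝ) - al) := by positivity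
  calc (volume C).toReal
      ≤ (ENNReal.ofReal (4*ε*(2*(5/3:ℝ)^N - 1) - 4*ε^2*(5:ℝ)^N + (5/9:ℝ)^N)).toReal :=
        ENNReal.toReal_mono ENNReal.ofReal_ne_top hchain
    _ ≤ 84/5 * (2:ℝ) ^ (-al) * ε ^ ((2:ℝ) - al) := by
        by_cases hx : 0 ≤ 4*ε*(2*(5/3:ℝ)^N - 1) - 4*ε^2*(5:ℝ)^N + (5/9:ℝ)^N
        · rw [ENNReal.toReal_ofReal hx]
          exact hfinal
        · push_neg at hx
          rw [ENNReal.ofReal_of_nonpos hx.le]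
          simpa using hRHSnn
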